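/- Define Θ : ℝ^{n+1} ∖ ℝ^{k−1} → ℝ^{n+3} by Θ(x) = ‖x^⊥‖^{−1} ( v − (1/2)‖x‖² w + C xᵀ + C x^⊥ ), where v, w are lightlike vectors in Lorentzian ℝ^{n+3} with ⟨v,w⟩ = 1 and C : ℝ^{n+1} → (span{v,w})^⊥ is a linear isometry. Write ℝ^{n+3} = W₁ ⊕ W₂ orthogonally with W₁ = C(ℝ^{k−1}) ⊕ span{v,w} and W₂ = C(ℝ^{n−k+2}), and write Θ(x) = Θ(x)₁ + Θ(x)₂ accordingly. Then for every x: ⟨Θ(x)₁, Θ(x)₁⟩ = −1 and ⟨Θ(x)₂, Θ(x)₂⟩ = 1; that is, Θ takes values in ℍ^k × 𝕊^{n−k+1} ⊂ W₁ ⊕ W₂. -/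

import Mathlib

open scoped RealInnerProductSpace

/-- The component of `x` in `ℝ^{n-k+2} = (ℝ^{k-1})^⊥`. -/
def perpPart (n k : ℕ) (x : EuclideanSpace ℝ (Fin (n + 1))) :
    EuclideanSpace ℝ (Fin (n + 1)) :=
  WithLp.toLp 2 (fun i => if (i : ℕ) < k - 1 then 0 else x i)

theorem stmt14 {n k : ℕ} (hk : 1 ≤ k) {L : Type*} [AddCommGroup L] [Module ℝ L]
    (B : LinearMap.BilinForm ℝ L) (hsymm : ∀ a b : L, B a b = B b a)
    (v w : L) (hww : B w w = 0) (hvv : B v v = 0) (hvw : B v w = 1)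
    (C : EuclideanSpace ℝ (Fin (n + 1)) →ₗ[ℝ] L)
    (hC : ∀ x y, B (C x) (C y) = ⟪x, y⟫)
    (hCv : ∀ x, B (C x) v = 0) (hCw : ∀ x, B (C x) w = 0)
    (x : EuclideanSpace ℝ (Fin (n + 1))) (hx : perpPart n k x ≠ 0) :
    B (‖perpPart n k x‖⁻¹ •
        (v - ((1 / 2) * ‖x‖ ^ 2) • w + C (x - perpPart n k x)))
      (‖perpPart n k x‖⁻¹ •
        (v - ((1 / 2) * ‖x‖ ^ 2) • w + C (x - perpPart n k x))) = -1 ∧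
    B (‖perpPart n k x‖⁻¹ • C (perpPart n k x))
      (‖perpPart n k x‖⁻¹ • C (perpPart n k x)) = 1 := by
  set p := perpPart n k x with hp
  have hxp : ⟪x, p⟫ = ⟪p, p⟫ := by
    simp only [hp, PiLp.inner_apply, perpPart, RCLike.inner_apply, conj_trivial]
    refine Finset.sum_congr rfl fun i _ => ?_
    by_cases h : (i : ℕ) < k - 1 <;> simp [h]
  have hnorm : (0:ℝ) < ‖p‖ := norm_pos_iff.mpr hx
  have hpp : ⟪p, p⟫ = ‖p‖ ^ 2 := real_inner_self_eq_norm_sq p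
  have hxx : ⟪x, x⟫ = ‖x‖ ^ 2 := real_inner_self_eq_norm_sq x
  have hWv : B w v = 1 := by rw [hsymm]; exact hvw
  have hvC : ∀ y, B v (C y) = 0 := fun y => by rw [hsymm]; exact hCv y
  have hwC : ∀ y, B w (C y) = 0 := fun y => by rw [hsymm]; exact hCw y
  have key : B (v - ((1 / 2) * ‖x‖ ^ 2) • w + C (x - p))
      (v - ((1 / 2) * ‖x‖ ^ 2) • w + C (x - p)) = -‖p‖ ^ 2 := by
    have h1 : ⟪p, x⟫ = ‖p‖ ^ 2 := by rw [real_inner_comm, hxp, hpp]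
    simp only [map_add, map_sub, map_smul, LinearMap.add_apply, LinearMap.sub_apply,
      LinearMap.smul_apply, smul_eq_mul, hvv, hww, hvw, hWv, hvC, hwC, hCv, hCw, hC,
      hxx, hpp, hxp, h1]
    ring
  have hsq : ‖p‖⁻¹ * ‖p‖⁻¹ * ‖p‖ ^ 2 = 1 := by
    rw [sq]; field_simp
  constructor
  · simp only [map_smul, LinearMap.smul_apply, smul_eq_mul, key]
    rw [show ‖p‖⁻¹ * (‖p‖⁻¹ * -‖p‖ ^ 2) = -(‖p‖⁻¹ * ‖p‖⁻¹ * ‖p‖ ^ 2) by ring, hsq]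
  · simp only [map_smul, LinearMap.smul_apply, smul_eq_mul, hC, hpp]
    rw [← mul_assoc, hsq]
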